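/- For all integers n ≥ 0 and s ≥ 0, the number of full binary trees with n internal vertices and Horton–Strahler number s equals the number of Dyck paths of length 2n whose height H satisfies ⌊log₂(1 + H)⌋ = s. -/

import Mathlib

/-- Words over the alphabet {1,2}, encoded as lists of booleans (`false` = 1, `true` = 2). -/
abbrev Word := List Bool

/-- Longest common prefix of two words (`u ∧ v`). -/
def lcp : Word → Word → Word
  | a :: as, b :: bs => if a = b then a :: lcp as bs else []
  | _, _ => []

/-- The lexicographic (strict) order on words; a strict prefix is smaller. -/
def wlex (u v : Word) : Prop := List.Lex (· < ·) u v

/-- A binary tree: a finite, prefix-closed set of words containing the empty word. -/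
def IsBinaryTree (t : Set Word) : Prop :=
  t.Finite ∧ ([] : Word) ∈ t ∧ ∀ u ∈ t, ∀ v : Word, v <+: u → v ∈ t

/-- Fullness: each vertex has either zero or two children. -/
def IsFull (t : Set Word) : Prop :=
  ∀ u ∈ t, (u ++ [false] ∈ t ↔ u ++ [true] ∈ t)

def IsFullBinaryTree (t : Set Word) : Prop := IsBinaryTree t ∧ IsFull t

/-- `φ` is an embedding of `t` into `t'`: injective on `t`, strictly increasing for the
lexicographic order, and preserving longest common prefixes. -/
def IsEmbedding (t t' : Set Word) (φ : Word → Word) : Prop :=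
  (∀ u ∈ t, φ u ∈ t') ∧
  (∀ u ∈ t, ∀ v ∈ t, u ≠ v → φ u ≠ φ v) ∧
  (∀ u ∈ t, ∀ v ∈ t, wlex u v → wlex (φ u) (φ v)) ∧
  (∀ u ∈ t, ∀ v ∈ t, φ (lcp u v) = lcp (φ u) (φ v))

/-- `t` can be embedded in `t'`. -/
def Embeds (t t' : Set Word) : Prop := ∃ φ, IsEmbedding t t' φ

/-- `graft b t = b · t`, the copy of `t` rooted at the child `b` of the root. -/
def graft (b : Bool) (t : Set Word) : Set Word := (fun w => b :: w) '' t

/-- The interpolating trees: τ₀ = {∅}, τ₁ = {∅,1,2},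
τ_{2m} = {∅} ∪ 1·τ_m ∪ 2·τ_{m-1}, τ_{2m+1} = {∅} ∪ 1·τ_m ∪ 2·τ_m (for m ≥ 1). -/
def tau : ℕ → Set Word
  | 0 => {[]}
  | 1 => {[], [false], [true]}
  | n + 2 => {[]} ∪ graft false (tau ((n + 2) / 2)) ∪ graft true (tau ((n + 1) / 2))
termination_by n => n
decreasing_by all_goals omega

/-- The subtree of `t` rooted at `u`: θ_u t = {v : uv ∈ t}. -/
def subtreeAt (u : Word) (t : Set Word) : Set Word := {v | u ++ v ∈ t}

/-- The refined Horton–Strahler number S(t) = max {r : τ_r embeds in t}. -/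
noncomputable def RHS (t : Set Word) : ℕ := sSup {r | Embeds (tau r) t}

/-- S_u(t) = S(θ_u t). -/
noncomputable def Sv (u : Word) (t : Set Word) : ℕ := RHS (subtreeAt u t)

/-- The set of internal vertices of `t` (those having a child in `t`). -/
def internals (t : Set Word) : Set Word :=
  {u | u ∈ t ∧ (u ++ [false] ∈ t ∨ u ++ [true] ∈ t)}

/-- A Dyck path of length `2n`: `d 0 = 0`, steps of `±1` on `[0, 2n]`, `d (2n) = 0`;
by convention the path is extended by zero beyond time `2n`. -/
def IsDyck (n : ℕ) (d : ℕ → ℕ) : Prop :=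
  d 0 = 0 ∧ (∀ i, 2 * n ≤ i → d i = 0) ∧
  ∀ i < 2 * n, d (i + 1) = d i + 1 ∨ d i = d (i + 1) + 1

/-- The height ‖d‖ of a (zero-extended) Dyck path. -/
noncomputable def height (d : ℕ → ℕ) : ℕ := sSup (Set.range d)

/-- The `j`-th spinal subpath of `d`: `d_j^spn (i) = |d(ρ_j + 1 + i) − m| − 1` for
`i ∈ [0, ρ_{j+1} − ρ_j − 2]`, extended by zero (here `(a - b) + (b - a) = |a - b|` in ℕ). -/
def dspn (d : ℕ → ℕ) (m : ℕ) (ρ : ℕ → ℕ) (j : ℕ) : ℕ → ℕ := fun i =>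
  if i ≤ ρ (j + 1) - ρ j - 2
  then (d (ρ j + 1 + i) - m) + (m - d (ρ j + 1 + i)) - 1 else 0

/-- The complete binary tree of height `s`: all words of length at most `s`. -/
def cb (s : ℕ) : Set Word := {u | u.length ≤ s}

/-- The Horton–Strahler number of `t`: the largest `s` such that `cb s` embeds in `t`. -/
noncomputable def HS (t : Set Word) : ℕ := sSup {s | Embeds (cb s) t}

namespace HSAux

lemma lcp_nil_left (v : Word) : lcp [] v = [] := by cases v <;> rfl
lemma lcp_nil_right (u : Word) : lcp u [] = [] := by cases u <;> rfl
lemma lcp_cons (a b : Bool) (u v : Word) :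
    lcp (a::u) (b::v) = if a = b then a :: lcp u v else [] := rfl
lemma lcp_cons_same (a : Bool) (u v : Word) : lcp (a::u) (a::v) = a :: lcp u v := by
  simp [lcp_cons]
lemma lcp_self (u : Word) : lcp u u = u := by
  induction u with
  | nil => rfl
  | cons a u ih => simp [lcp_cons, ih]

lemma lcp_prefix_left (u v : Word) : lcp u v <+: u := by
  induction u generalizing v with
  | nil => simp [lcp_nil_left]
  | cons a u ih =>
    cases v with
    | nil => simp [lcp_nil_right]
    | cons b v =>
      rw [lcp_cons]
      by_cases h : a = b
      · simpa [h] using ih v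
      · simp [h]

lemma lcp_ne_nil {x y : Word} (h : lcp x y ≠ []) :
    ∃ a x' y', x = a :: x' ∧ y = a :: y' := by
  match x, y with
  | [], _ => simp [lcp_nil_left] at h
  | a::x', [] => simp [lcp_nil_right] at h
  | a::x', b::y' =>
    by_cases hab : a = b
    · exact ⟨a, x', y', rfl, by rw [hab]⟩
    · rw [lcp_cons, if_neg hab] at h; exact absurd rfl h

lemma mem_cb {s : ℕ} {u : Word} : u ∈ cb s ↔ u.length ≤ s := Iff.rfl

lemma mem_subtreeAt {b : Bool} {t : Set Word} {v : Word} :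
    v ∈ subtreeAt [b] t ↔ b :: v ∈ t := Iff.rfl

/-- cb 0 embeds in anything containing the root. -/
lemma embeds_cb_zero {t : Set Word} (h : ([] : Word) ∈ t) : Embeds (cb 0) t := by
  refine ⟨fun _ => [], fun u hu => h, ?_, ?_, ?_⟩
  · intro u hu v hv huv
    rw [mem_cb, Nat.le_zero, List.length_eq_zero_iff] at hu hv
    exact absurd (hu.trans hv.symm) huv
  · intro u hu v hv huv
    rw [mem_cb, Nat.le_zero, List.length_eq_zero_iff] at hu hv
    subst hu; subst hv; exact absurd huv (List.not_lex_nil)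
  · intro u hu v hv; simp [lcp_nil_left]

lemma embeds_mono {t : Set Word} {s s' : ℕ} (hss : s ≤ s') (h : Embeds (cb s') t) :
    Embeds (cb s) t := by
  obtain ⟨φ, h1, h2, h3, h4⟩ := h
  have sub : ∀ u : Word, u ∈ cb s → u ∈ cb s' := fun u hu => le_trans hu hss
  exact ⟨φ, fun u hu => h1 u (sub u hu), fun u hu v hv => h2 u (sub u hu) v (sub v hv),
    fun u hu v hv => h3 u (sub u hu) v (sub v hv),
    fun u hu v hv => h4 u (sub u hu) v (sub v hv)⟩

/-- lift an embedding into a subtree to the whole tree -/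
lemma embeds_lift {t : Set Word} {s : ℕ} (b : Bool)
    (h : Embeds (cb s) (subtreeAt [b] t)) : Embeds (cb s) t := by
  obtain ⟨φ, h1, h2, h3, h4⟩ := h
  refine ⟨fun u => b :: φ u, fun u hu => h1 u hu, ?_, ?_, ?_⟩
  · intro u hu v hv huv heq
    exact h2 u hu v hv huv (by injection heq)
  · intro u hu v hv huv
    exact List.Lex.cons (h3 u hu v hv huv)
  · intro u hu v hv
    show b :: φ (lcp u v) = lcp (b :: φ u) (b :: φ v)
    rw [lcp_cons_same, h4 u hu v hv]

/-- the combination map -/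
def comb (φ₁ φ₂ : Word → Word) : Word → Word
  | [] => []
  | false :: u => false :: φ₁ u
  | true :: u => true :: φ₂ u

@[simp] lemma comb_nil (φ₁ φ₂) : comb φ₁ φ₂ [] = [] := rfl
@[simp] lemma comb_false (φ₁ φ₂ u) : comb φ₁ φ₂ (false :: u) = false :: φ₁ u := rfl
@[simp] lemma comb_true (φ₁ φ₂ u) : comb φ₁ φ₂ (true :: u) = true :: φ₂ u := rfl

lemma wlex_head_lt {a b : Bool} {x y : Word} (h : wlex (a::x) (b::y)) (hab : a ≠ b) :
    a < b := by
  cases h with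
  | rel h => exact h
  | cons h => exact absurd rfl hab

lemma wlex_cons_iff {b : Bool} {u v : Word} (h : wlex (b::u) (b::v)) : wlex u v := by
  cases h with
  | rel h => exact absurd h (by simp)
  | cons h => exact h

/-- combine embeddings into the two subtrees -/
lemma embeds_combine {t : Set Word} {s : ℕ} (hroot : ([] : Word) ∈ t)
    (hf : Embeds (cb s) (subtreeAt [false] t)) (ht : Embeds (cb s) (subtreeAt [true] t)) :
    Embeds (cb (s+1)) t := by
  obtain ⟨φ₁, f1, f2, f3, f4⟩ := hf
  obtain ⟨φ₂, t1, t2, t3, t4⟩ := ht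
  refine ⟨comb φ₁ φ₂, ?_, ?_, ?_, ?_⟩
  · intro u hu
    match u with
    | [] => exact hroot
    | false :: u => exact f1 u (by simpa [mem_cb] using hu)
    | true :: u => exact t1 u (by simpa [mem_cb] using hu)
  · intro u hu v hv huv heq
    match u, v with
    | [], [] => exact huv rfl
    | [], false :: v => simp at heq
    | [], true :: v => simp at heq
    | false :: u, [] => simp at heq
    | true :: u, [] => simp at heq
    | false :: u, true :: v => simp at heq
    | true :: u, false :: v => simp at heq
    | false :: u, false :: v =>
        simp only [comb_false, List.cons.injEq, true_and] at heq
        exact f2 u (by simpa [mem_cb] using hu) v (by simpa [mem_cb] using hv)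
          (by intro h; exact huv (by rw [h])) heq
    | true :: u, true :: v =>
        simp only [comb_true, List.cons.injEq, true_and] at heq
        exact t2 u (by simpa [mem_cb] using hu) v (by simpa [mem_cb] using hv)
          (by intro h; exact huv (by rw [h])) heq
  · intro u hu v hv huv
    match u, v with
    | [], [] => exact absurd huv (List.not_lex_nil)
    | [], false :: v => exact List.Lex.nil
    | [], true :: v => exact List.Lex.nil
    | _ :: u, [] => exact absurd huv (List.not_lex_nil)
    | false :: u, true :: v => exact List.Lex.rel (by simp)
    | true :: u, false :: v =>
        cases huv with
        | rel h => exact absurd h (by simp)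
    | false :: u, false :: v =>
        exact List.Lex.cons (f3 u (by simpa [mem_cb] using hu) v (by simpa [mem_cb] using hv)
          (wlex_cons_iff huv))
    | true :: u, true :: v =>
        exact List.Lex.cons (t3 u (by simpa [mem_cb] using hu) v (by simpa [mem_cb] using hv)
          (wlex_cons_iff huv))
  · intro u hu v hv
    match u, v with
    | [], v => simp [lcp_nil_left]
    | a :: u, [] => simp [lcp_nil_right]
    | false :: u, true :: v => simp [lcp_cons]
    | true :: u, false :: v => simp [lcp_cons]
    | false :: u, false :: v =>
        rw [lcp_cons_same, comb_false, comb_false, comb_false, lcp_cons_same,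
          f4 u (by simpa [mem_cb] using hu) v (by simpa [mem_cb] using hv)]
    | true :: u, true :: v =>
        rw [lcp_cons_same, comb_true, comb_true, comb_true, lcp_cons_same,
          t4 u (by simpa [mem_cb] using hu) v (by simpa [mem_cb] using hv)]


lemma mem_cb_cons {s : ℕ} {b : Bool} {u : Word} (hu : u ∈ cb s) : b :: u ∈ cb (s+1) := by
  simpa [mem_cb] using hu

lemma lcp_mem_cb {s : ℕ} {u v : Word} (hu : u ∈ cb s) : lcp u v ∈ cb s :=
  le_trans (List.IsPrefix.length_le (lcp_prefix_left u v)) hu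

/-- strip a common first letter from the images of the child words -/
lemma strip {t : Set Word} {s : ℕ} (b : Bool) (φ : Word → Word)
    (he : IsEmbedding (cb (s+1)) t φ)
    (hb : ∀ u : Word, u ∈ cb s → φ (b::u) = b :: (φ (b::u)).tail) :
    Embeds (cb s) (subtreeAt [b] t) := by
  obtain ⟨h1, h2, h3, h4⟩ := he
  refine ⟨fun u => (φ (b::u)).tail, ?_, ?_, ?_, ?_⟩
  · intro u hu
    rw [mem_subtreeAt]
    have := h1 (b::u) (mem_cb_cons hu)
    rwa [hb u hu] at this
  · intro u hu v hv huv heq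
    change List.tail (φ (b::u)) = List.tail (φ (b::v)) at heq
    have : φ (b::u) = φ (b::v) := by
      rw [hb u hu, hb v hv, heq]
    exact h2 (b::u) (mem_cb_cons hu) (b::v) (mem_cb_cons hv)
      (by simp [huv]) this
  · intro u hu v hv huv
    have := h3 (b::u) (mem_cb_cons hu) (b::v) (mem_cb_cons hv) (List.Lex.cons huv)
    rw [hb u hu, hb v hv] at this
    exact wlex_cons_iff this
  · intro u hu v hv
    have hl : lcp u v ∈ cb s := lcp_mem_cb hu
    have := h4 (b::u) (mem_cb_cons hu) (b::v) (mem_cb_cons hv)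
    rw [lcp_cons_same] at this
    rw [hb _ hl, hb u hu, hb v hv, lcp_cons_same] at this
    injection this

/-- strip a common first letter from all images -/
lemma strip_all {t : Set Word} {s : ℕ} (c : Bool) (φ : Word → Word)
    (he : IsEmbedding (cb s) t φ)
    (hc : ∀ u : Word, u ∈ cb s → φ u = c :: (φ u).tail) :
    Embeds (cb s) (subtreeAt [c] t) := by
  obtain ⟨h1, h2, h3, h4⟩ := he
  refine ⟨fun u => (φ u).tail, ?_, ?_, ?_, ?_⟩
  · intro u hu
    rw [mem_subtreeAt]
    have := h1 u hu
    rwa [hc u hu] at this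
  · intro u hu v hv huv heq
    change List.tail (φ u) = List.tail (φ v) at heq
    exact h2 u hu v hv huv (by rw [hc u hu, hc v hv, heq])
  · intro u hu v hv huv
    have := h3 u hu v hv huv
    rw [hc u hu, hc v hv] at this
    exact wlex_cons_iff this
  · intro u hu v hv
    have hl : lcp u v ∈ cb s := lcp_mem_cb hu
    have := h4 u hu v hv
    rw [hc _ hl, hc u hu, hc v hv, lcp_cons_same] at this
    injection this

lemma embeds_split {t : Set Word} {s : ℕ} (h : Embeds (cb (s+1)) t) :
    Embeds (cb (s+1)) (subtreeAt [false] t) ∨ Embeds (cb (s+1)) (subtreeAt [true] t) ∨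
    (Embeds (cb s) (subtreeAt [false] t) ∧ Embeds (cb s) (subtreeAt [true] t)) := by
  obtain ⟨φ, he⟩ := h
  obtain ⟨h1, h2, h3, h4⟩ := he
  have hnil : ([] : Word) ∈ cb (s+1) := by simp [mem_cb]
  have hm : ∀ u ∈ cb (s+1), φ [] <+: φ u := by
    intro u hu
    have h := h4 u hu [] hnil
    rw [lcp_nil_right] at h
    rw [h]
    exact lcp_prefix_left _ _
  by_cases hz : φ [] = []
  · -- root goes to root; split into the two subtrees
    right; right
    -- images of nonempty words are nonempty with constant head on each side
    have hne : ∀ (b : Bool) (u : Word), b :: u ∈ cb (s+1) → φ (b::u) ≠ [] := by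
      intro b u hu heq
      exact h2 (b::u) hu [] hnil (by simp) (by rw [heq, hz])
    have hhead : ∀ (b : Bool) (u : Word), b :: u ∈ cb (s+1) →
        ∃ x y, φ (b::u) = (φ [b]).head! :: x ∧ φ [b] = (φ [b]).head! :: y := by
      intro b u hu
      have hb1 : [b] ∈ cb (s+1) := by simp [mem_cb]
      have h := h4 (b::u) hu [b] hb1
      rw [show lcp (b::u) [b] = [b] by rw [lcp_cons_same, lcp_nil_right]] at h
      have hlcp : lcp (φ (b::u)) (φ [b]) ≠ [] := by
        rw [← h]
        intro hq
        exact hne b [] hb1 (by simpa using hq)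
      obtain ⟨a, x, y, hx, hy⟩ := lcp_ne_nil hlcp
      refine ⟨x, y, ?_, ?_⟩
      · rw [hx, hy]; rfl
      · rw [hy]; rfl
    have hf1 : [false] ∈ cb (s+1) := by simp [mem_cb]
    have ht1 : [true] ∈ cb (s+1) := by simp [mem_cb]
    set cF := (φ [false]).head! with hcF
    set cT := (φ [true]).head! with hcT
    -- cF ≠ cT
    have hlcpft : lcp (φ [false]) (φ [true]) = [] := by
      have h := h4 [false] hf1 [true] ht1
      rw [show lcp [false] [true] = [] from rfl, hz] at h
      exact h.symm
    have hdiff : cF ≠ cT := by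
      intro heq
      obtain ⟨x, _, hx, -⟩ := hhead false [] hf1
      obtain ⟨y, _, hy, -⟩ := hhead true [] ht1
      rw [hx, hy, ← hcF, ← hcT, ← heq, lcp_cons_same] at hlcpft
      simp at hlcpft
    -- cF < cT from lex order
    have horder : cF = false ∧ cT = true := by
      have hw : wlex (φ [false]) (φ [true]) :=
        h3 [false] hf1 [true] ht1 (List.Lex.rel (by simp))
      obtain ⟨x, -, hx, -⟩ := hhead false [] hf1
      obtain ⟨y, -, hy, -⟩ := hhead true [] ht1
      rw [hx, hy, ← hcF, ← hcT] at hw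
      have hlt : cF < cT := wlex_head_lt hw hdiff
      exact ⟨Bool.lt_iff.mp hlt |>.1, Bool.lt_iff.mp hlt |>.2⟩
    constructor
    · refine strip false φ ⟨h1, h2, h3, h4⟩ ?_
      intro u hu
      obtain ⟨x, -, hx, -⟩ := hhead false u (mem_cb_cons hu)
      rw [hx, ← hcF, horder.1]
      rfl
    · refine strip true φ ⟨h1, h2, h3, h4⟩ ?_
      intro u hu
      obtain ⟨x, -, hx, -⟩ := hhead true u (mem_cb_cons hu)
      rw [hx, ← hcT, horder.2]
      rfl
  · -- the image of the root is below a child c; strip c from everything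
    obtain ⟨c, m', hc⟩ : ∃ c m', φ [] = c :: m' := by
      cases hφ : φ [] with
      | nil => exact absurd hφ hz
      | cons c m' => exact ⟨c, m', rfl⟩
    have hstrip : ∀ u : Word, u ∈ cb (s+1) → φ u = c :: (φ u).tail := by
      intro u hu
      obtain ⟨r, hr⟩ := hm u hu
      rw [hc] at hr
      rw [← hr]
      rfl
    have := strip_all c φ ⟨h1, h2, h3, h4⟩ hstrip
    cases c with
    | false => exact Or.inl this
    | true => exact Or.inr (Or.inl this)


/-! ### Encoding inductive binary trees -/

open Tree in
/-- Recursive Strahler number -/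
def str : Tree Unit → ℕ
  | BinaryTree.nil => 0
  | BinaryTree.node _ l r => max (max (str l) (str r)) (min (str l) (str r) + 1)

def encode : Tree Unit → Set Word
  | BinaryTree.nil => {[]}
  | BinaryTree.node _ l r => {[]} ∪ graft false (encode l) ∪ graft true (encode r)

@[simp] lemma encode_nil : encode BinaryTree.nil = {[]} := rfl

lemma mem_encode_node {a : Unit} {l r : Tree Unit} {w : Word} :
    w ∈ encode (BinaryTree.node a l r) ↔
      w = [] ∨ (∃ w', w = false :: w' ∧ w' ∈ encode l) ∨
        (∃ w', w = true :: w' ∧ w' ∈ encode r) := by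
  show w ∈ {[]} ∪ graft false (encode l) ∪ graft true (encode r) ↔ _
  simp only [Set.mem_union, Set.mem_singleton_iff, graft, Set.mem_image]
  constructor
  · rintro ((h | ⟨w', h1, h2⟩) | ⟨w', h1, h2⟩)
    · exact Or.inl h
    · exact Or.inr (Or.inl ⟨w', h2.symm, h1⟩)
    · exact Or.inr (Or.inr ⟨w', h2.symm, h1⟩)
  · rintro (h | ⟨w', h1, h2⟩ | ⟨w', h1, h2⟩)
    · exact Or.inl (Or.inl h)
    · exact Or.inl (Or.inr ⟨w', h2, h1.symm⟩)
    · exact Or.inr ⟨w', h2, h1.symm⟩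

lemma nil_mem_encode (T : Tree Unit) : ([] : Word) ∈ encode T := by
  cases T with
  | nil => rfl
  | node a l r => exact mem_encode_node.mpr (Or.inl rfl)

lemma cons_mem_encode_node {a : Unit} {l r : Tree Unit} {b : Bool} {w : Word} :
    b :: w ∈ encode (BinaryTree.node a l r) ↔ w ∈ encode (if b then r else l) := by
  rw [mem_encode_node]
  cases b <;> simp

lemma subtreeAt_encode_false {a : Unit} {l r : Tree Unit} :
    subtreeAt [false] (encode (BinaryTree.node a l r)) = encode l := by
  ext v
  rw [mem_subtreeAt, cons_mem_encode_node]
  simp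

lemma subtreeAt_encode_true {a : Unit} {l r : Tree Unit} :
    subtreeAt [true] (encode (BinaryTree.node a l r)) = encode r := by
  ext v
  rw [mem_subtreeAt, cons_mem_encode_node]
  simp

lemma not_embeds_singleton (s : ℕ) : ¬ Embeds (cb (s+1)) {([] : Word)} := by
  rintro ⟨φ, h1, h2, -, -⟩
  have hnil : ([] : Word) ∈ cb (s+1) := by simp [mem_cb]
  have hf : [false] ∈ cb (s+1) := by simp [mem_cb]
  have e1 : φ [] = [] := h1 [] hnil
  have e2 : φ [false] = [] := h1 [false] hf
  exact h2 [] hnil [false] hf (by simp) (by rw [e1, e2])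

theorem embeds_encode_iff (T : Tree Unit) : ∀ s : ℕ, Embeds (cb s) (encode T) ↔ s ≤ str T := by
  induction T with
  | nil =>
    intro s
    cases s with
    | zero => simpa using embeds_cb_zero (by exact rfl)
    | succ s =>
      simp only [str]
      rw [encode_nil]
      exact iff_of_false (not_embeds_singleton s) (by omega)
  | node a l r ihl ihr =>
    intro s
    cases s with
    | zero => simpa using embeds_cb_zero (nil_mem_encode _)
    | succ s =>
      constructor
      · intro h
        rcases embeds_split h with h | h | ⟨hf, ht⟩
        · rw [subtreeAt_encode_false] at h
          have := (ihl _).mp h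
          simp only [str]; omega
        · rw [subtreeAt_encode_true] at h
          have := (ihr _).mp h
          simp only [str]; omega
        · rw [subtreeAt_encode_false] at hf
          rw [subtreeAt_encode_true] at ht
          have h1 := (ihl _).mp hf
          have h2 := (ihr _).mp ht
          simp only [str]; omega
      · intro h
        simp only [str] at h
        rcases Nat.lt_or_ge (str l) (s+1) with hl | hl
        · rcases Nat.lt_or_ge (str r) (s+1) with hr | hr
          · -- both small: use min+1, i.e. s ≤ both
            have h1 : s ≤ str l := by omega
            have h2 : s ≤ str r := by omega
            refine embeds_combine (nil_mem_encode _) ?_ ?_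
            · rw [subtreeAt_encode_false]; exact (ihl s).mpr h1
            · rw [subtreeAt_encode_true]; exact (ihr s).mpr h2
          · exact embeds_lift true (by rw [subtreeAt_encode_true]; exact (ihr _).mpr hr)
        · exact embeds_lift false (by rw [subtreeAt_encode_false]; exact (ihl _).mpr hl)

theorem HS_encode (T : Tree Unit) : HS (encode T) = str T := by
  have : {s | Embeds (cb s) (encode T)} = Set.Iic (str T) := by
    ext s; exact embeds_encode_iff T s
  rw [HS, this, csSup_Iic]

lemma encode_FBT (T : Tree Unit) : IsFullBinaryTree (encode T) := by
  induction T with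
  | nil =>
    refine ⟨⟨Set.finite_singleton _, rfl, ?_⟩, ?_⟩
    · rintro u rfl v hv
      simpa using List.prefix_nil.mp hv
    · rintro u rfl
      constructor <;> (intro h; simp only [encode_nil, Set.mem_singleton_iff] at h; simp at h)
  | node a l r ihl ihr =>
    obtain ⟨⟨lfin, -, lpre⟩, lfull⟩ := ihl
    obtain ⟨⟨rfin, -, rpre⟩, rfull⟩ := ihr
    refine ⟨⟨?_, nil_mem_encode _, ?_⟩, ?_⟩
    · exact Set.Finite.union (Set.Finite.union (Set.finite_singleton _)
        (Set.Finite.image _ lfin)) (Set.Finite.image _ rfin)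
    · intro u hu v hv
      cases v with
      | nil => exact nil_mem_encode _
      | cons b' v' =>
        cases u with
        | nil => exact absurd hv (by simp)
        | cons b u' =>
          obtain ⟨hb, hv'⟩ := List.cons_prefix_cons.mp hv
          subst hb
          rw [cons_mem_encode_node] at hu ⊢
          cases b' with
          | false => exact lpre u' hu v' hv'
          | true => exact rpre u' hu v' hv' 
    · intro u hu
      cases u with
      | nil =>
        constructor <;> (intro _; rw [show ([]:Word) ++ [_] = [_] from rfl, cons_mem_encode_node])
        · exact nil_mem_encode _
        · exact nil_mem_encode _
      | cons b u =>
        rw [cons_mem_encode_node] at hu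
        have h2 : ∀ c : Bool, (b :: u) ++ [c] = b :: (u ++ [c]) := fun c => rfl
        rw [h2, h2, cons_mem_encode_node, cons_mem_encode_node]
        cases b with
        | false => exact lfull u hu
        | true => exact rfull u hu

lemma internals_encode_nil : internals (encode BinaryTree.nil) = ∅ := by
  ext u
  simp only [internals, encode_nil, Set.mem_setOf_eq, Set.mem_singleton_iff,
    Set.mem_empty_iff_false, iff_false]
  rintro ⟨rfl, h | h⟩ <;> simp at h

lemma internals_encode_node {a : Unit} {l r : Tree Unit} :
    internals (encode (BinaryTree.node a l r)) =
      {[]} ∪ graft false (internals (encode l)) ∪ graft true (internals (encode r)) := by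
  ext u
  simp only [internals, Set.mem_setOf_eq, Set.mem_union, Set.mem_singleton_iff, graft,
    Set.mem_image]
  cases u with
  | nil =>
    simp only [true_or, iff_true, List.nil_append]
    refine ⟨nil_mem_encode _, Or.inl ?_⟩
    rw [show ([false] : Word) = false :: [] from rfl, cons_mem_encode_node]
    exact nil_mem_encode _
  | cons b u =>
    have h2 : ∀ c : Bool, (b :: u) ++ [c] = b :: (u ++ [c]) := fun _ => rfl
    rw [cons_mem_encode_node, h2, h2, cons_mem_encode_node, cons_mem_encode_node]
    cases b with
    | false =>
      simp only [if_neg (by simp : ¬(false = true))]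
      constructor
      · rintro ⟨h1, h⟩
        exact Or.inl (Or.inr ⟨u, ⟨h1, h⟩, rfl⟩)
      · rintro ((h | ⟨w, hw, he⟩) | ⟨w, hw, he⟩)
        · simp at h
        · obtain rfl : w = u := by injection he
          exact hw
        · simp at he
    | true =>
      simp only [if_pos rfl]
      constructor
      · rintro ⟨h1, h⟩
        exact Or.inr ⟨u, ⟨h1, h⟩, rfl⟩
      · rintro ((h | ⟨w, hw, he⟩) | ⟨w, hw, he⟩)
        · simp at h
        · simp at he
        · obtain rfl : w = u := by injection he
          exact hw

lemma internals_subset (t : Set Word) : internals t ⊆ t := fun _ h => h.1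

lemma ncard_internals_encode (T : Tree Unit) : (internals (encode T)).ncard = T.numNodes := by
  induction T with
  | nil => rw [internals_encode_nil]; simp [BinaryTree.numNodes]
  | node a l r ihl ihr =>
    have lfin : (internals (encode l)).Finite :=
      Set.Finite.subset (encode_FBT l).1.1 (internals_subset _)
    have rfin : (internals (encode r)).Finite :=
      Set.Finite.subset (encode_FBT r).1.1 (internals_subset _)
    rw [internals_encode_node]
    have hdisj1 : Disjoint ({[]} : Set Word) (graft false (internals (encode l))) := by
      rw [Set.disjoint_left]
      rintro w rfl ⟨w', -, hw⟩
      simp at hw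
    have hdisj2 : Disjoint ({([] : Word)} ∪ graft false (internals (encode l)))
        (graft true (internals (encode r))) := by
      rw [Set.disjoint_left]
      rintro w (rfl | ⟨w', -, hw⟩) ⟨w'', -, hw'⟩
      · simp at hw'
      · rw [← hw] at hw'; simp at hw'
    rw [Set.ncard_union_eq hdisj2 (Set.Finite.union (Set.finite_singleton _)
        (Set.Finite.image _ lfin)) (Set.Finite.image _ rfin),
      Set.ncard_union_eq hdisj1 (Set.finite_singleton _) (Set.Finite.image _ lfin)]
    rw [show graft false (internals (encode l)) = (fun w => false :: w) '' _ from rfl,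
      show graft true (internals (encode r)) = (fun w => true :: w) '' _ from rfl,
      Set.ncard_image_of_injective _ (List.cons_injective),
      Set.ncard_image_of_injective _ (List.cons_injective)]
    simp only [Set.ncard_singleton, BinaryTree.numNodes, Tree.numNodes, ihl, ihr]
    omega

lemma encode_injective : Function.Injective encode := by
  intro T1 T2 h
  induction T1 generalizing T2 with
  | nil =>
    cases T2 with
    | nil => rfl
    | node a l r =>
      exfalso
      have : ([false] : Word) ∈ encode (BinaryTree.node a l r) := by
        rw [show ([false] : Word) = false :: [] from rfl, cons_mem_encode_node]
        exact nil_mem_encode _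
      rw [← h] at this
      simp only [encode_nil, Set.mem_singleton_iff] at this
      exact absurd this (by simp)
  | node a l r ihl ihr =>
    cases T2 with
    | nil =>
      exfalso
      have : ([false] : Word) ∈ encode (BinaryTree.node a l r) := by
        rw [show ([false] : Word) = false :: [] from rfl, cons_mem_encode_node]
        exact nil_mem_encode _
      rw [h] at this
      simp only [encode_nil, Set.mem_singleton_iff] at this
      exact absurd this (by simp)
    | node a' l' r' =>
      have hl : encode l = encode l' := by
        rw [← @subtreeAt_encode_false a l r, ← @subtreeAt_encode_false a' l' r', h]
      have hr : encode r = encode r' := by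
        rw [← @subtreeAt_encode_true a l r, ← @subtreeAt_encode_true a' l' r', h]
      rw [ihl hl, ihr hr]

lemma FBT_children {t : Set Word} (h : IsFullBinaryTree t) (hne : t ≠ {[]}) :
    ∀ b : Bool, [b] ∈ t := by
  obtain ⟨⟨hfin, hnil, hpre⟩, hfull⟩ := h
  have : ∃ w ∈ t, w ≠ ([] : Word) := by
    by_contra hc
    push_neg at hc
    exact hne (Set.eq_singleton_iff_unique_mem.mpr ⟨hnil, hc⟩)
  obtain ⟨w, hw, hwne⟩ := this
  obtain ⟨c, w', rfl⟩ : ∃ c w', w = c :: w' := by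
    cases w with
    | nil => exact absurd rfl hwne
    | cons c w' => exact ⟨c, w', rfl⟩
  have hc : [c] ∈ t := hpre _ hw [c] ⟨w', rfl⟩
  have := hfull [] hnil
  simp only [List.nil_append] at this
  intro b
  cases b <;> cases c <;> first | exact hc | exact this.mp hc | exact this.mpr hc

lemma FBT_subtree {t : Set Word} (h : IsFullBinaryTree t) (hne : t ≠ {[]}) (b : Bool) :
    IsFullBinaryTree (subtreeAt [b] t) := by
  obtain ⟨⟨hfin, hnil, hpre⟩, hfull⟩ := h
  refine ⟨⟨?_, ?_, ?_⟩, ?_⟩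
  · exact Set.Finite.preimage (Set.injOn_of_injective List.cons_injective) hfin
  · exact FBT_children ⟨⟨hfin, hnil, hpre⟩, hfull⟩ hne b
  · intro u hu v hv
    rw [mem_subtreeAt] at hu ⊢
    exact hpre _ hu _ (List.cons_prefix_cons.mpr ⟨rfl, hv⟩)
  · intro u hu
    rw [mem_subtreeAt] at hu
    have := hfull (b :: u) hu
    simpa [mem_subtreeAt] using this

lemma FBT_decomp {t : Set Word} (h : IsFullBinaryTree t) (hne : t ≠ {[]}) :
    t = {[]} ∪ graft false (subtreeAt [false] t) ∪ graft true (subtreeAt [true] t) := by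
  ext w
  simp only [Set.mem_union, Set.mem_singleton_iff, graft, Set.mem_image]
  constructor
  · intro hw
    cases w with
    | nil => exact Or.inl (Or.inl rfl)
    | cons b w' =>
      cases b with
      | false => exact Or.inl (Or.inr ⟨w', hw, rfl⟩)
      | true => exact Or.inr ⟨w', hw, rfl⟩
  · rintro ((rfl | ⟨w', hw, rfl⟩) | ⟨w', hw, rfl⟩)
    · exact h.1.2.1
    · exact hw
    · exact hw

lemma FBT_ncard_decomp {t : Set Word} (h : IsFullBinaryTree t) (hne : t ≠ {[]}) :
    t.ncard = 1 + (subtreeAt [false] t).ncard + (subtreeAt [true] t).ncard := by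
  have f1 : (subtreeAt [false] t).Finite :=
    Set.Finite.preimage (Set.injOn_of_injective List.cons_injective) h.1.1
  have f2 : (subtreeAt [true] t).Finite :=
    Set.Finite.preimage (Set.injOn_of_injective List.cons_injective) h.1.1
  have hdisj1 : Disjoint ({[]} : Set Word) (graft false (subtreeAt [false] t)) := by
    rw [Set.disjoint_left]
    rintro w rfl ⟨w', -, hw⟩
    simp at hw
  have hdisj2 : Disjoint ({([] : Word)} ∪ graft false (subtreeAt [false] t))
      (graft true (subtreeAt [true] t)) := by
    rw [Set.disjoint_left]
    rintro w (rfl | ⟨w', -, hw⟩) ⟨w'', -, hw'⟩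
    · simp at hw'
    · rw [← hw] at hw'; simp at hw'
  conv_lhs => rw [FBT_decomp h hne]
  rw [Set.ncard_union_eq hdisj2 (Set.Finite.union (Set.finite_singleton _)
      (Set.Finite.image _ f1)) (Set.Finite.image _ f2),
    Set.ncard_union_eq hdisj1 (Set.finite_singleton _) (Set.Finite.image _ f1),
    show graft false (subtreeAt [false] t) = (fun w => false :: w) '' _ from rfl,
    show graft true (subtreeAt [true] t) = (fun w => true :: w) '' _ from rfl,
    Set.ncard_image_of_injective _ (List.cons_injective),
    Set.ncard_image_of_injective _ (List.cons_injective)]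
  simp

lemma encode_surjective : ∀ (n : ℕ) (t : Set Word), t.ncard ≤ n → IsFullBinaryTree t →
    ∃ T : Tree Unit, encode T = t := by
  intro n
  induction n with
  | zero =>
    intro t hc h
    exfalso
    have h0 : t.ncard = 0 := by omega
    rw [Set.ncard_eq_zero h.1.1] at h0
    have := h.1.2.1
    rw [h0] at this
    simp at this
  | succ n ih =>
    intro t hc h
    by_cases hne : t = {[]}
    · exact ⟨BinaryTree.nil, by rw [encode_nil, hne]⟩
    · have hdec := FBT_ncard_decomp h hne
      obtain ⟨T1, hT1⟩ := ih (subtreeAt [false] t) (by omega) (FBT_subtree h hne false)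
      obtain ⟨T2, hT2⟩ := ih (subtreeAt [true] t) (by omega) (FBT_subtree h hne true)
      refine ⟨BinaryTree.node () T1 T2, ?_⟩
      rw [show encode (BinaryTree.node () T1 T2) =
        {[]} ∪ graft false (encode T1) ∪ graft true (encode T2) from rfl, hT1, hT2]
      exact (FBT_decomp h hne).symm

/-! ### Dyck word heights -/

open DyckStep

def wht (w : List DyckStep) (i : ℕ) : ℕ := (w.take i).count U - (w.take i).count D

def hgt (w : List DyckStep) : ℕ := (Finset.range (w.length + 1)).sup (wht w)

@[simp] lemma wht_zero (w : List DyckStep) : wht w 0 = 0 := by simp [wht]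

@[simp] lemma hgt_nil : hgt ([] : List DyckStep) = 0 := by simp [hgt, wht]

lemma count_U_add_count_D (w : List DyckStep) : w.count U + w.count D = w.length := by
  induction w with
  | nil => simp
  | cons a w ih =>
    cases a <;> simp [List.count_cons, ih] <;> omega

lemma wht_of_length_le {w : List DyckStep} {i : ℕ} (h : w.length ≤ i) :
    wht w i = w.count U - w.count D := by
  rw [wht, List.take_of_length_le h]

lemma le_hgt (w : List DyckStep) (i : ℕ) (hi : i ≤ w.length) : wht w i ≤ hgt w :=
  Finset.le_sup (by simp [Finset.mem_range]; omega)

lemma hgt_le_iff {w : List DyckStep} {m : ℕ} : hgt w ≤ m ↔ ∀ i ≤ w.length, wht w i ≤ m := by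
  constructor
  · intro h i hi
    exact le_trans (le_hgt w i hi) h
  · intro h
    refine Finset.sup_le fun i hi => ?_
    rw [Finset.mem_range] at hi
    exact h i (by omega)

lemma exists_hgt (w : List DyckStep) : ∃ i ≤ w.length, wht w i = hgt w := by
  obtain ⟨i, hi, h⟩ := Finset.exists_mem_eq_sup (Finset.range (w.length + 1))
    ⟨0, by simp⟩ (wht w)
  rw [Finset.mem_range] at hi
  exact ⟨i, by omega, h.symm⟩

lemma wht_append_left {p : DyckWord} (w : List DyckStep) {i : ℕ} (hi : i ≤ p.toList.length) :
    wht (p.toList ++ w) i = wht p.toList i := by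
  rw [wht, wht, List.take_append, show i - p.toList.length = 0 by omega,
    List.take_zero, List.append_nil]

lemma wht_append_right {p : DyckWord} (w : List DyckStep) {i : ℕ} (hi : p.toList.length ≤ i) :
    wht (p.toList ++ w) i = wht w (i - p.toList.length) := by
  rw [wht, wht, List.take_append, List.take_of_length_le hi,
    List.count_append, List.count_append, p.count_U_eq_count_D]
  omega

lemma hgt_append (p q : DyckWord) :
    hgt (p.toList ++ q.toList) = max (hgt p.toList) (hgt q.toList) := by
  apply le_antisymm
  · rw [hgt_le_iff]
    intro i hi
    rcases le_or_gt i p.toList.length with h | h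
    · rw [wht_append_left _ h]
      exact le_trans (le_hgt _ _ h) (le_max_left _ _)
    · rw [wht_append_right _ (by omega)]
      rw [List.length_append] at hi
      exact le_trans (le_hgt _ _ (by omega)) (le_max_right _ _)
  · rw [max_le_iff]
    constructor
    · obtain ⟨i, hi, hw⟩ := exists_hgt p.toList
      rw [← hw, ← wht_append_left (p := p) q.toList hi]
      exact le_hgt _ _ (by rw [List.length_append]; omega)
    · obtain ⟨i, hi, hw⟩ := exists_hgt q.toList
      rw [← hw, ← show wht (p.toList ++ q.toList) (p.toList.length + i) = wht q.toList i by
        rw [wht_append_right _ (by omega)]; congr 1; omega]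
      exact le_hgt _ _ (by rw [List.length_append]; omega)

lemma nest_toList (p : DyckWord) : p.nest.toList = U :: p.toList ++ [D] := rfl

lemma wht_nest_succ (p : DyckWord) {i : ℕ} (hi : i ≤ p.toList.length) :
    wht p.nest.toList (i + 1) = wht p.toList i + 1 := by
  rw [nest_toList, wht, wht, List.take_append,
    show i + 1 - (U :: p.toList).length = 0 by simp only [List.length_cons]; omega,
    List.take_zero, List.append_nil, List.take_succ_cons]
  have h1 := p.count_D_le_count_U i
  simp [List.count_cons]
  omega

lemma hgt_nest (p : DyckWord) : hgt p.nest.toList = hgt p.toList + 1 := by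
  apply le_antisymm
  · rw [hgt_le_iff]
    intro i hi
    rw [nest_toList, List.length_append, List.length_cons, List.length_singleton] at hi
    match i with
    | 0 => simp
    | (i + 1) =>
      rcases le_or_gt i p.toList.length with h | h
      · rw [wht_nest_succ p h]
        have := le_hgt p.toList i h
        omega
      · have hi2 : i = p.toList.length + 1 := by omega
        subst hi2
        rw [nest_toList, wht, List.take_of_length_le (by simp)]
        have := p.count_U_eq_count_D
        simp [List.count_append, List.count_cons]
        omega
  · obtain ⟨i, hi, hw⟩ := exists_hgt p.toList
    rw [← hw, ← wht_nest_succ p hi]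
    apply le_hgt
    rw [nest_toList, List.length_append, List.length_cons, List.length_singleton]
    omega

/-! ### Counting Dyck words by height -/

/-- The finset of Dyck words of semilength `n`. -/
noncomputable def DWf (n : ℕ) : Finset DyckWord :=
  (BinaryTree.treesOfNumNodesEq n).map (DyckWord.equivTree.symm.toEmbedding)

lemma mem_DWf {n : ℕ} {p : DyckWord} : p ∈ DWf n ↔ p.semilength = n := by
  rw [DWf, Finset.mem_map]
  constructor
  · rintro ⟨T, hT, rfl⟩
    rw [BinaryTree.mem_treesOfNumNodesEq] at hT
    rw [← hT, ← DyckWord.numNodes_toTree]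
    simp [DyckWord.toTree_ofTree]
  · intro h
    refine ⟨DyckWord.equivTree p, ?_, by simp [DyckWord.ofTree_toTree]⟩
    rw [BinaryTree.mem_treesOfNumNodesEq]
    simpa [DyckWord.numNodes_toTree] using h

lemma semilength_eq_zero {p : DyckWord} : p.semilength = 0 ↔ p = 0 := by
  constructor
  · intro h
    have := p.two_mul_semilength_eq_length
    rw [h] at this
    rw [← DyckWord.toList_eq_nil]
    rw [← List.length_eq_zero_iff]
    omega
  · rintro rfl; rfl

noncomputable def Cd (n h : ℕ) : ℕ := ((DWf n).filter (fun p => hgt p.toList ≤ h)).card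

lemma Cd_zero (h : ℕ) : Cd 0 h = 1 := by
  have : DWf 0 = {(0 : DyckWord)} := by
    ext p
    rw [mem_DWf, semilength_eq_zero, Finset.mem_singleton]
  rw [Cd, this, Finset.filter_singleton, if_pos (by simp [DyckWord.toList_eq_nil.mpr rfl])]
  rfl

lemma one_le_hgt {p : DyckWord} (hp : p ≠ 0) : 1 ≤ hgt p.toList := by
  have hne : p.toList ≠ [] := DyckWord.toList_ne_nil.mpr hp
  obtain ⟨a, t, hl⟩ : ∃ a t, p.toList = a :: t := by
    cases hq : p.toList with
    | nil => exact absurd hq hne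
    | cons a t => exact ⟨a, t, rfl⟩
  have ha : a = DyckStep.U := by
    have hcnt := p.count_D_le_count_U 1
    rw [hl] at hcnt
    cases a with
    | U => rfl
    | D => simp at hcnt
  have h1 : wht p.toList 1 = 1 := by
    rw [wht, hl, ha]
    simp
  have := le_hgt p.toList 1 (by rw [hl]; simp)
  omega

lemma Cd_succ_zero (n : ℕ) : Cd (n+1) 0 = 0 := by
  rw [Cd, Finset.card_eq_zero, Finset.filter_eq_empty_iff]
  intro p hp
  rw [mem_DWf] at hp
  have hp0 : p ≠ 0 := by
    intro h; rw [h] at hp; simp at hp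
  have := one_le_hgt hp0
  omega

lemma hgt_decomp {p : DyckWord} (hp : p ≠ 0) :
    hgt p.toList = max (hgt p.insidePart.toList + 1) (hgt p.outsidePart.toList) := by
  conv_lhs => rw [← DyckWord.nest_insidePart_add_outsidePart hp]
  rw [show (p.insidePart.nest + p.outsidePart).toList
      = p.insidePart.nest.toList ++ p.outsidePart.toList from rfl,
    hgt_append, hgt_nest]

lemma Cd_rec (n h : ℕ) :
    Cd (n+1) (h+1) = ∑ ij ∈ Finset.HasAntidiagonal.antidiagonal n, Cd ij.1 h * Cd ij.2 (h+1) := by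
  rw [Cd, Finset.card_eq_sum_card_fiberwise
    (f := fun p => (p.insidePart.semilength, p.outsidePart.semilength))
    (t := Finset.HasAntidiagonal.antidiagonal n) ?_]
  · refine Finset.sum_congr rfl fun ij hij => ?_
    rw [Finset.HasAntidiagonal.mem_antidiagonal] at hij
    rw [Cd, Cd, ← Finset.card_product]
    refine Finset.card_bij' (fun p _ => (p.insidePart, p.outsidePart))
      (fun qr _ => qr.1.nest + qr.2) ?_ ?_ ?_ ?_
    · intro p hp
      simp only [Finset.mem_filter, mem_DWf] at hp
      obtain ⟨⟨hp1, hp2⟩, hp3⟩ := hp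
      have hp0 : p ≠ 0 := by
        intro h0; rw [h0] at hp1; simp at hp1
      have hd := hgt_decomp hp0
      have hij1 : p.insidePart.semilength = ij.1 := congrArg Prod.fst hp3
      have hij2 : p.outsidePart.semilength = ij.2 := congrArg Prod.snd hp3
      simp only [Finset.mem_product, Finset.mem_filter, mem_DWf]
      exact ⟨⟨hij1, by omega⟩, ⟨hij2, by omega⟩⟩
    · intro qr hqr
      simp only [Finset.mem_product, Finset.mem_filter, mem_DWf] at hqr
      obtain ⟨⟨hq1, hq2⟩, hr1, hr2⟩ := hqr
      have hz : qr.1.nest ≠ 0 := DyckWord.nest_ne_zero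
      have hin : (qr.1.nest + qr.2).insidePart = qr.1 := by
        rw [DyckWord.insidePart_add hz, DyckWord.insidePart_nest]
      have hout : (qr.1.nest + qr.2).outsidePart = qr.2 := by
        rw [DyckWord.outsidePart_add hz, DyckWord.outsidePart_nest, zero_add]
      have hsl : (qr.1.nest + qr.2).semilength = n + 1 := by
        rw [DyckWord.semilength_add, DyckWord.semilength_nest, hq1, hr1]
        omega
      have hne : qr.1.nest + qr.2 ≠ 0 := by
        intro h0
        rw [h0] at hsl
        simp at hsl
      have hd := hgt_decomp hne
      rw [hin, hout] at hd
      simp only [Finset.mem_filter, mem_DWf]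
      refine ⟨⟨hsl, by omega⟩, ?_⟩
      rw [hin, hout, Prod.ext_iff]
      exact ⟨hq1, hr1⟩
    · intro p hp
      simp only [Finset.mem_filter, mem_DWf] at hp
      have hp0 : p ≠ 0 := by
        intro h0; rw [h0] at hp; simp at hp
      exact DyckWord.nest_insidePart_add_outsidePart hp0
    · intro qr hqr
      simp only [Finset.mem_product, Finset.mem_filter, mem_DWf] at hqr
      have hz : qr.1.nest ≠ 0 := DyckWord.nest_ne_zero
      have hin : (qr.1.nest + qr.2).insidePart = qr.1 := by
        rw [DyckWord.insidePart_add hz, DyckWord.insidePart_nest]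
      have hout : (qr.1.nest + qr.2).outsidePart = qr.2 := by
        rw [DyckWord.outsidePart_add hz, DyckWord.outsidePart_nest, zero_add]
      rw [Prod.ext_iff]
      exact ⟨hin, hout⟩
  · intro p hp
    simp only [Finset.mem_coe, Finset.mem_filter, mem_DWf] at hp
    have hp0 : p ≠ 0 := by
      intro h0; rw [h0] at hp; simp at hp
    rw [Finset.mem_coe, Finset.HasAntidiagonal.mem_antidiagonal]
    show p.insidePart.semilength + p.outsidePart.semilength = n
    have := DyckWord.semilength_insidePart_add_semilength_outsidePart_add_one hp0
    omega

/-! ### Counting trees by Strahler number -/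

def At (n s : ℕ) : ℕ := ((BinaryTree.treesOfNumNodesEq n).filter (fun T => str T ≤ s)).card

def Dt (n s : ℕ) : ℕ := ((BinaryTree.treesOfNumNodesEq n).filter (fun T => str T = s)).card

lemma At_zero (s : ℕ) : At 0 s = 1 := by
  rw [At, BinaryTree.treesOfNumNodesEq_zero, Finset.filter_singleton, if_pos (by simp [str])]
  rfl

lemma tree_node_of_numNodes_succ {T : Tree Unit} {n : ℕ} (h : T.numNodes = n + 1) :
    ∃ l r, T = BinaryTree.node () l r := by
  cases T with
  | nil => simp [BinaryTree.numNodes] at h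
  | node a l r => exact ⟨l, r, by rfl⟩

lemma At_succ_zero (n : ℕ) : At (n+1) 0 = 0 := by
  rw [At, Finset.card_eq_zero, Finset.filter_eq_empty_iff]
  intro T hT
  rw [BinaryTree.mem_treesOfNumNodesEq] at hT
  obtain ⟨l, r, rfl⟩ := tree_node_of_numNodes_succ hT
  simp only [str]
  omega

lemma At_split (n s : ℕ) : At n (s+1) = At n s + Dt n (s+1) := by
  rw [At, At, Dt]
  rw [show (BinaryTree.treesOfNumNodesEq n).filter (fun T => str T ≤ s + 1)
      = (BinaryTree.treesOfNumNodesEq n).filter (fun T => str T ≤ s ∨ str T = s + 1) by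
    apply Finset.filter_congr
    intro T _
    constructor
    · intro h; omega
    · intro h; omega]
  rw [Finset.filter_or]
  rw [Finset.card_union_of_disjoint]
  rw [Finset.disjoint_filter]
  intro T _ h1 h2
  omega

lemma At_rec (n s : ℕ) :
    At (n+1) (s+1) = ∑ ij ∈ Finset.HasAntidiagonal.antidiagonal n,
      (At ij.1 s * At ij.2 (s+1) + Dt ij.1 (s+1) * At ij.2 s) := by
  rw [At, Finset.card_eq_sum_card_fiberwise
    (f := fun T => ((BinaryTree.left T).numNodes, (BinaryTree.right T).numNodes))
    (t := Finset.HasAntidiagonal.antidiagonal n) ?_]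
  · refine Finset.sum_congr rfl fun ij hij => ?_
    rw [Finset.HasAntidiagonal.mem_antidiagonal] at hij
    set fib := ((BinaryTree.treesOfNumNodesEq (n+1)).filter (fun T => str T ≤ s+1)).filter
      (fun T => ((BinaryTree.left T).numNodes, (BinaryTree.right T).numNodes) = ij) with hfib
    rw [← Finset.card_filter_add_card_filter_not
      (p := fun T => str (BinaryTree.left T) ≤ s) (s := fib)]
    congr 1
    · -- small-left part: At ij.1 s * At ij.2 (s+1)
      rw [At, At, ← Finset.card_product]
      refine Finset.card_bij' (fun T _ => (BinaryTree.left T, BinaryTree.right T))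
        (fun lr _ => BinaryTree.node () lr.1 lr.2) ?_ ?_ ?_ ?_
      · intro T hT
        simp only [hfib, Finset.mem_filter, BinaryTree.mem_treesOfNumNodesEq] at hT
        obtain ⟨⟨⟨hnum, hstr⟩, hfj⟩, hQ⟩ := hT
        obtain ⟨l, r, rfl⟩ := tree_node_of_numNodes_succ hnum
        simp only [BinaryTree.left, BinaryTree.right] at hfj hQ ⊢
        have h1 : l.numNodes = ij.1 := congrArg Prod.fst hfj
        have h2 : r.numNodes = ij.2 := congrArg Prod.snd hfj
        simp only [str] at hstr
        simp only [Finset.mem_product, Finset.mem_filter, BinaryTree.mem_treesOfNumNodesEq]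
        exact ⟨⟨h1, hQ⟩, ⟨h2, by omega⟩⟩
      · intro lr hlr
        simp only [Finset.mem_product, Finset.mem_filter, BinaryTree.mem_treesOfNumNodesEq] at hlr
        obtain ⟨⟨hl1, hl2⟩, hr1, hr2⟩ := hlr
        simp only [hfib, Finset.mem_filter, BinaryTree.mem_treesOfNumNodesEq]
        simp only [BinaryTree.numNodes,
          BinaryTree.left, BinaryTree.right, str]
        refine ⟨⟨⟨by omega, by omega⟩, ?_⟩, hl2⟩
        rw [Prod.ext_iff]
        exact ⟨hl1, hr1⟩
      · intro T hT
        simp only [hfib, Finset.mem_filter, BinaryTree.mem_treesOfNumNodesEq] at hT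
        obtain ⟨⟨⟨hnum, hstr⟩, hfj⟩, hQ⟩ := hT
        obtain ⟨l, r, rfl⟩ := tree_node_of_numNodes_succ hnum
        rfl
      · intro lr hlr
        rfl
    · -- big-left part: Dt ij.1 (s+1) * At ij.2 s
      rw [Dt, At, ← Finset.card_product]
      refine Finset.card_bij' (fun T _ => (BinaryTree.left T, BinaryTree.right T))
        (fun lr _ => BinaryTree.node () lr.1 lr.2) ?_ ?_ ?_ ?_
      · intro T hT
        simp only [hfib, Finset.mem_filter, BinaryTree.mem_treesOfNumNodesEq] at hT
        obtain ⟨⟨⟨hnum, hstr⟩, hfj⟩, hQ⟩ := hT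
        obtain ⟨l, r, rfl⟩ := tree_node_of_numNodes_succ hnum
        simp only [BinaryTree.left, BinaryTree.right] at hfj hQ ⊢
        have h1 : l.numNodes = ij.1 := congrArg Prod.fst hfj
        have h2 : r.numNodes = ij.2 := congrArg Prod.snd hfj
        simp only [str] at hstr
        simp only [Finset.mem_product, Finset.mem_filter, BinaryTree.mem_treesOfNumNodesEq]
        exact ⟨⟨h1, by omega⟩, ⟨h2, by omega⟩⟩
      · intro lr hlr
        simp only [Finset.mem_product, Finset.mem_filter, BinaryTree.mem_treesOfNumNodesEq] at hlr
        obtain ⟨⟨hl1, hl2⟩, hr1, hr2⟩ := hlr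
        simp only [hfib, Finset.mem_filter, BinaryTree.mem_treesOfNumNodesEq]
        simp only [BinaryTree.numNodes,
          BinaryTree.left, BinaryTree.right, str]
        refine ⟨⟨⟨by omega, by omega⟩, ?_⟩, by omega⟩
        rw [Prod.ext_iff]
        exact ⟨hl1, hr1⟩
      · intro T hT
        simp only [hfib, Finset.mem_filter, BinaryTree.mem_treesOfNumNodesEq] at hT
        obtain ⟨⟨⟨hnum, hstr⟩, hfj⟩, hQ⟩ := hT
        obtain ⟨l, r, rfl⟩ := tree_node_of_numNodes_succ hnum
        rfl
      · intro lr hlr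
        rfl
  · intro T hT
    simp only [Finset.mem_coe, Finset.mem_filter, BinaryTree.mem_treesOfNumNodesEq] at hT
    obtain ⟨l, r, rfl⟩ := tree_node_of_numNodes_succ hT.1
    rw [Finset.mem_coe, Finset.HasAntidiagonal.mem_antidiagonal]
    show l.numNodes + r.numNodes = n
    have : (BinaryTree.node () l r).numNodes = n + 1 := hT.1
    simp only [BinaryTree.numNodes] at this
    omega

/-! ### Generating functions -/

open PowerSeries

noncomputable def ts (s : ℕ) : PowerSeries ℤ := PowerSeries.mk fun n => (At n s : ℤ)
noncomputable def ds (s : ℕ) : PowerSeries ℤ := PowerSeries.mk fun n => (Dt n s : ℤ)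
noncomputable def csr (h : ℕ) : PowerSeries ℤ := PowerSeries.mk fun n => (Cd n h : ℤ)

noncomputable def Fib : ℕ → PowerSeries ℤ
  | 0 => 0
  | 1 => 1
  | (k+2) => Fib (k+1) - PowerSeries.X * Fib k

lemma Fib_rec (k : ℕ) : Fib (k+2) = Fib (k+1) - PowerSeries.X * Fib k := rfl

lemma Fib_const (k : ℕ) : constantCoeff (R := ℤ) (Fib (k+1)) = 1 := by
  induction k with
  | zero => show constantCoeff (R := ℤ) 1 = 1; simp
  | succ k ih =>
    rw [Fib_rec, map_sub, map_mul, constantCoeff_X, ih, zero_mul, sub_zero]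

lemma Fib_ne_zero (k : ℕ) : Fib (k+1) ≠ 0 := by
  intro h
  have := Fib_const k
  rw [h, map_zero] at this
  exact absurd this (by norm_num)

lemma csr_zero : csr 0 = 1 := by
  ext n
  rw [csr, coeff_mk, coeff_one]
  cases n with
  | zero => simp [Cd_zero]
  | succ n => simp [Cd_succ_zero]

lemma csr_rec (h : ℕ) : csr (h+1) = 1 + PowerSeries.X * (csr h * csr (h+1)) := by
  ext n
  cases n with
  | zero =>
    rw [csr, coeff_mk, Cd_zero]
    simp
  | succ n =>
    rw [csr, coeff_mk, Cd_rec, map_add, coeff_one, if_neg (by omega),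
      coeff_succ_X_mul, coeff_mul]
    push_cast
    rw [zero_add]
    refine Finset.sum_congr rfl fun ij _ => ?_
    simp only [csr, coeff_mk]

lemma ts_zero : ts 0 = 1 := by
  ext n
  rw [ts, coeff_mk, coeff_one]
  cases n with
  | zero => simp [At_zero]
  | succ n => simp [At_succ_zero]

lemma ds_eq (s : ℕ) : ds (s+1) = ts (s+1) - ts s := by
  ext n
  rw [ds, coeff_mk, map_sub, ts, ts, coeff_mk, coeff_mk]
  have := At_split n s
  omega

lemma ts_rec (s : ℕ) :
    ts (s+1) = 1 + PowerSeries.X * (ts s * ts (s+1) + ds (s+1) * ts s) := by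
  ext n
  cases n with
  | zero =>
    rw [ts, coeff_mk, At_zero]
    simp
  | succ n =>
    rw [map_add, coeff_one, if_neg (Nat.succ_ne_zero n), zero_add, coeff_succ_X_mul, map_add,
      coeff_mul, coeff_mul, ← Finset.sum_add_distrib]
    simp only [ts, ds, coeff_mk, At_rec]
    push_cast
    rfl

lemma ts_rec' (s : ℕ) :
    ts (s+1) = 1 + PowerSeries.X * (2 * ts s * ts (s+1) - ts s ^ 2) := by
  have h := ts_rec s
  rw [ds_eq] at h
  linear_combination h

lemma csr_Fib (h : ℕ) : csr h * Fib (h+2) = Fib (h+1) := by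
  induction h with
  | zero =>
    rw [csr_zero, one_mul, Fib_rec]
    show Fib 1 - PowerSeries.X * Fib 0 = Fib 1
    rw [show Fib 0 = 0 from rfl, mul_zero, sub_zero]
  | succ h ih =>
    show csr (h+1) * Fib (h+3) = Fib (h+2)
    have hrec := csr_rec h
    have hfib : Fib (h+3) = Fib (h+2) - PowerSeries.X * Fib (h+1) := Fib_rec (h+1)
    linear_combination csr (h+1) * hfib + Fib (h+2) * hrec + PowerSeries.X * csr (h+1) * ih

lemma Fib_dbl (m : ℕ) :
    Fib (2*m+1) = Fib (m+1)^2 - PowerSeries.X * Fib m ^ 2 ∧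
    Fib (2*m+2) = Fib (m+1)^2 - 2 * PowerSeries.X * Fib m * Fib (m+1) := by
  induction m with
  | zero =>
    constructor
    · show Fib 1 = Fib 1 ^2 - PowerSeries.X * Fib 0 ^2
      rw [show Fib 0 = 0 from rfl, show Fib 1 = 1 from rfl]
      ring
    · show Fib 2 = Fib 1 ^2 - 2 * PowerSeries.X * Fib 0 * Fib 1
      rw [show Fib 0 = 0 from rfl, show Fib 1 = 1 from rfl, Fib_rec,
        show Fib 0 = 0 from rfl, show Fib 1 = 1 from rfl]
      ring
  | succ m ih =>
    obtain ⟨h1, h2⟩ := ih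
    have e1 : 2*(m+1)+1 = (2*m+1)+2 := by ring
    have e2 : 2*(m+1)+2 = (2*m+2)+2 := by ring
    have godd : Fib (2*(m+1)+1) = Fib (m+2)^2 - PowerSeries.X * Fib (m+1) ^ 2 := by
      rw [e1, Fib_rec, show (2*m+1)+1 = 2*m+2 from rfl, h1, h2, Fib_rec m]
      ring
    refine ⟨godd, ?_⟩
    rw [e2, Fib_rec, show (2*m+2)+1 = 2*(m+1)+1 from by ring, godd, h2, Fib_rec m]
    ring

instance : NoZeroDivisors (PowerSeries ℤ) := inferInstance

lemma csr_key (m : ℕ) :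
    csr (2*m+2) = 1 + PowerSeries.X * (2 * csr (2*m+2) * csr m - csr m ^ 2) := by
  have hb : csr m * Fib (m+2) = Fib (m+1) := csr_Fib m
  have hY : csr (2*m+2) * Fib (2*m+4) = Fib (2*m+3) := by
    have := csr_Fib (2*m+2)
    rwa [show 2*m+2+2 = 2*m+4 from by ring, show 2*m+2+1 = 2*m+3 from by ring] at this
  have hN : Fib (2*m+4) = Fib (m+2)^2 - 2 * PowerSeries.X * Fib (m+1) * Fib (m+2) := by
    have := (Fib_dbl (m+1)).2
    rwa [show 2*(m+1)+2 = 2*m+4 from by ring] at this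
  have hN1 : Fib (2*m+3) = Fib (m+2)^2 - PowerSeries.X * Fib (m+1) ^ 2 := by
    have := (Fib_dbl (m+1)).1
    rwa [show 2*(m+1)+1 = 2*m+3 from by ring] at this
  have hnz : Fib (2*m+4) * Fib (m+2)^2 ≠ 0 := by
    refine mul_ne_zero ?_ (pow_ne_zero _ ?_)
    · rw [show 2*m+4 = (2*m+3)+1 from by ring]; exact Fib_ne_zero _
    · exact Fib_ne_zero _
  have hmain : (csr (2*m+2) - (1 + PowerSeries.X * (2 * csr (2*m+2) * csr m - csr m ^ 2)))
      * (Fib (2*m+4) * Fib (m+2)^2) = 0 := by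
    have expand : (csr (2*m+2) - (1 + PowerSeries.X * (2 * csr (2*m+2) * csr m - csr m ^ 2)))
        * (Fib (2*m+4) * Fib (m+2)^2)
        = (csr (2*m+2) * Fib (2*m+4)) * Fib (m+2)^2
          - Fib (2*m+4) * Fib (m+2)^2
          - 2 * PowerSeries.X * ((csr (2*m+2) * Fib (2*m+4)) * (csr m * Fib (m+2))) * Fib (m+2)
          + PowerSeries.X * (csr m * Fib (m+2))^2 * Fib (2*m+4) := by
      ring
    rw [expand, hY, hb, hN, hN1]
    ring
  rcases mul_eq_zero.mp hmain with h | h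
  · exact sub_eq_zero.mp h
  · exact absurd h hnz

lemma ts_eq_csr (s : ℕ) : ts s = csr (2^(s+1) - 2) := by
  induction s with
  | zero => rw [ts_zero, show 2^1 - 2 = 0 from rfl, csr_zero]
  | succ s ih =>
    show ts (s+1) = csr (2^(s+2) - 2)
    have hE : 2^(s+2) - 2 = 2*(2^(s+1) - 2) + 2 := by
      have : 2 ≤ 2^(s+1) := by
        have := Nat.one_le_two_pow (n := s)
        rw [pow_succ]
        omega
      rw [pow_succ]
      omega
    have h2 : csr (2^(s+2)-2) = 1 + PowerSeries.X * (2 * csr (2^(s+2)-2) * ts s - ts s ^ 2) := by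
      rw [hE, ih]
      exact csr_key _
    have h1 := ts_rec' s
    have hsub : (ts (s+1) - csr (2^(s+2)-2)) * (1 - 2 * PowerSeries.X * ts s) = 0 := by
      linear_combination h1 - h2
    have hnz : (1 - 2 * PowerSeries.X * ts s) ≠ 0 := by
      intro h
      have : constantCoeff (R := ℤ) (1 - 2 * PowerSeries.X * ts s) = 1 := by
        rw [map_sub, map_one, map_mul, map_mul, constantCoeff_X]
        ring
      rw [h, map_zero] at this
      exact absurd this (by norm_num)
    rcases mul_eq_zero.mp hsub with h | h
    · exact sub_eq_zero.mp h
    · exact absurd h hnz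

lemma At_eq_Cd (n s : ℕ) : At n s = Cd n (2^(s+1) - 2) := by
  have := ts_eq_csr s
  have hc := congrArg (fun f => PowerSeries.coeff (R := ℤ) n f) this
  simp only [ts, csr, coeff_mk] at hc
  exact_mod_cast hc

/-! ### Final count comparisons -/

noncomputable def Pd (n s : ℕ) : ℕ :=
  ((DWf n).filter (fun p => Nat.log 2 (1 + hgt p.toList) = s)).card

lemma log_eq_iff' (H s : ℕ) : Nat.log 2 (1 + H) = s ↔ (2^s ≤ 1 + H ∧ 1 + H < 2^(s+1)) := by
  constructor
  · rintro rfl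
    exact ⟨Nat.pow_log_le_self 2 (by omega), Nat.lt_pow_succ_log_self (by norm_num) _⟩
  · rintro ⟨h1, h2⟩
    exact Nat.log_eq_of_pow_le_of_lt_pow h1 h2

lemma Pd_zero (n : ℕ) : Pd n 0 = Cd n 0 := by
  rw [Pd, Cd]
  apply congrArg
  apply Finset.filter_congr
  intro p _
  rw [log_eq_iff' (hgt p.toList) 0]
  simp only [pow_zero, pow_one]
  omega

lemma Cd_split (n s : ℕ) : Cd n (2^(s+2) - 2) = Cd n (2^(s+1) - 2) + Pd n (s+1) := by
  rw [Cd, Cd, Pd]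
  have hp1 : (1:ℕ) ≤ 2^s := Nat.one_le_two_pow
  have hp2 : (2:ℕ)^(s+1) = 2 * 2^s := by rw [pow_succ]; ring
  have hp3 : (2:ℕ)^(s+2) = 2 * 2^(s+1) := by rw [pow_succ (n := s+1)]; ring
  rw [show (DWf n).filter (fun p => hgt p.toList ≤ 2^(s+2) - 2)
      = (DWf n).filter (fun p => hgt p.toList ≤ 2^(s+1) - 2 ∨
          Nat.log 2 (1 + hgt p.toList) = s + 1) by
    apply Finset.filter_congr
    intro p _
    rw [log_eq_iff' (hgt p.toList) (s+1)]
    constructor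
    · intro h; omega
    · intro h; omega]
  rw [Finset.filter_or, Finset.card_union_of_disjoint]
  rw [Finset.disjoint_filter]
  intro p _ h1 h2
  rw [log_eq_iff' (hgt p.toList) (s+1)] at h2
  omega

lemma Dt_eq_Pd (n s : ℕ) : Dt n s = Pd n s := by
  cases s with
  | zero =>
    have h1 : Dt n 0 = At n 0 := by
      rw [Dt, At]
      apply congrArg
      apply Finset.filter_congr
      intro T _
      omega
    rw [h1, At_eq_Cd, show 2^(0+1) - 2 = 0 from rfl, Pd_zero]
  | succ s =>
    have h1 := At_split n s
    have h2 := Cd_split n s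
    have e1 := At_eq_Cd n s
    have e2 := At_eq_Cd n (s+1)
    rw [show (s+1)+1 = s+2 from rfl] at e2
    omega

lemma card_tree_subtype (n s : ℕ) :
    Nat.card {T : Tree Unit // T.numNodes = n ∧ str T = s} = Dt n s := by
  have h1 : {T : Tree Unit | T.numNodes = n ∧ str T = s}
      = ↑((BinaryTree.treesOfNumNodesEq n).filter (fun T => str T = s)) := by
    ext T
    simp [BinaryTree.mem_treesOfNumNodesEq]
  calc Nat.card {T : Tree Unit // T.numNodes = n ∧ str T = s}
      = {T : Tree Unit | T.numNodes = n ∧ str T = s}.ncard := Nat.card_coe_set_eq _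
    _ = Dt n s := by rw [h1, Set.ncard_coe_finset]; rfl

lemma card_dw_subtype (n s : ℕ) :
    Nat.card {p : DyckWord // p.semilength = n ∧ Nat.log 2 (1 + hgt p.toList) = s} = Pd n s := by
  have h1 : {p : DyckWord | p.semilength = n ∧ Nat.log 2 (1 + hgt p.toList) = s}
      = ↑((DWf n).filter (fun p => Nat.log 2 (1 + hgt p.toList) = s)) := by
    ext p
    simp [mem_DWf]
  calc Nat.card {p : DyckWord // p.semilength = n ∧ Nat.log 2 (1 + hgt p.toList) = s}
      = {p : DyckWord | p.semilength = n ∧ Nat.log 2 (1 + hgt p.toList) = s}.ncard :=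
        Nat.card_coe_set_eq _
    _ = Pd n s := by rw [h1, Set.ncard_coe_finset]; rfl

lemma card_FBT (n s : ℕ) :
    Nat.card {t : Set Word // IsFullBinaryTree t ∧ (internals t).ncard = n ∧ HS t = s}
    = Nat.card {T : Tree Unit // T.numNodes = n ∧ str T = s} := by
  refine (Nat.card_congr (Equiv.ofBijective
    (fun x : {T : Tree Unit // T.numNodes = n ∧ str T = s} =>
      (⟨encode x.1, encode_FBT x.1,
        by rw [ncard_internals_encode]; exact x.2.1,
        by rw [HS_encode]; exact x.2.2⟩ :
        {t : Set Word // IsFullBinaryTree t ∧ (internals t).ncard = n ∧ HS t = s}))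
    ⟨?_, ?_⟩)).symm
  · intro x y h
    exact Subtype.ext (encode_injective (congrArg Subtype.val h))
  · rintro ⟨t, hFBT, hn, hs⟩
    obtain ⟨T, hT⟩ := encode_surjective t.ncard t le_rfl hFBT
    refine ⟨⟨T, ?_, ?_⟩, Subtype.ext hT⟩
    · rw [← ncard_internals_encode T, hT]; exact hn
    · rw [← HS_encode T, hT]; exact hs

/-! ### Functions vs Dyck words -/

def dOf (p : DyckWord) : ℕ → ℕ := fun i => wht p.toList i

def wOf (d : ℕ → ℕ) (n : ℕ) : List DyckStep :=
  (List.range (2*n)).map (fun i => if d (i+1) = d i + 1 then U else D)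

lemma wOf_length (d : ℕ → ℕ) (n : ℕ) : (wOf d n).length = 2*n := by
  rw [wOf, List.length_map, List.length_range]

lemma length_toList (p : DyckWord) : p.toList.length = 2 * p.semilength :=
  (p.two_mul_semilength_eq_length).symm

lemma take_succ_getElem {α : Type*} (l : List α) (i : ℕ) (h : i < l.length) :
    l.take (i+1) = l.take i ++ [l[i]] := by
  rw [List.take_succ, List.getElem?_eq_getElem h]
  rfl

@[simp] lemma count_UU : List.count U [U] = 1 := rfl
@[simp] lemma count_DU : List.count D [U] = 0 := rfl
@[simp] lemma count_UD : List.count U [D] = 0 := rfl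
@[simp] lemma count_DD : List.count D [D] = 1 := rfl

lemma isDyck_dOf (p : DyckWord) : IsDyck p.semilength (dOf p) := by
  refine ⟨by simp [dOf], ?_, ?_⟩
  · intro i hi
    rw [← length_toList] at hi
    rw [dOf, wht_of_length_le hi, p.count_U_eq_count_D]
    omega
  · intro i hi
    rw [← length_toList] at hi
    have hts := take_succ_getElem p.toList i hi
    have h1 := p.count_D_le_count_U i
    have h2 := p.count_D_le_count_U (i+1)
    rw [dOf, dOf, wht, wht, hts, List.count_append, List.count_append]
    rw [hts, List.count_append, List.count_append] at h2
    cases hg : p.toList[i] with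
    | U =>
      left
      rw [hg] at h2
      simp only [count_UU, count_DU] at h2 ⊢
      omega
    | D =>
      right
      rw [hg] at h2
      simp only [count_UD, count_DD] at h2 ⊢
      omega

lemma height_dOf (p : DyckWord) : height (dOf p) = hgt p.toList := by
  rw [height]
  apply IsGreatest.csSup_eq
  constructor
  · obtain ⟨i, hi, hw⟩ := exists_hgt p.toList
    exact ⟨i, hw⟩
  · rintro y ⟨i, rfl⟩
    rcases le_or_gt i p.toList.length with h | h
    · exact le_hgt _ _ h
    · rw [dOf, wht_of_length_le (by omega), p.count_U_eq_count_D]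
      simp

lemma wOf_count {n : ℕ} {d : ℕ → ℕ} (hd : IsDyck n d) :
    ∀ k, k ≤ 2*n →
      ((wOf d n).take k).count U = ((wOf d n).take k).count D + d k := by
  intro k
  induction k with
  | zero =>
    intro _
    simp [hd.1]
  | succ k ih =>
    intro hk
    have hlen : k < (wOf d n).length := by rw [wOf_length]; omega
    have hts := take_succ_getElem (wOf d n) k hlen
    have hget : (wOf d n)[k] = if d (k+1) = d k + 1 then U else D := by
      simp only [wOf, List.getElem_map, List.getElem_range]
    rw [hts, List.count_append, List.count_append, ih (by omega)]
    rcases hd.2.2 k (by omega) with h | h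
    · rw [hget, if_pos h, count_UU, count_DU]
      omega
    · have hne : ¬ (d (k+1) = d k + 1) := by omega
      rw [hget, if_neg hne, count_UD, count_DD]
      omega

lemma wOf_balance {n : ℕ} {d : ℕ → ℕ} (hd : IsDyck n d) :
    (wOf d n).count U = (wOf d n).count D := by
  have h := wOf_count hd (2*n) le_rfl
  rw [List.take_of_length_le (by rw [wOf_length])] at h
  rw [h, hd.2.1 (2*n) le_rfl]
  omega

lemma wOf_nonneg {n : ℕ} {d : ℕ → ℕ} (hd : IsDyck n d) (i : ℕ) :
    ((wOf d n).take i).count D ≤ ((wOf d n).take i).count U := by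
  rcases le_or_gt i (2*n) with h | h
  · rw [wOf_count hd i h]; omega
  · rw [List.take_of_length_le (by rw [wOf_length]; omega)]
    rw [← List.take_of_length_le (le_of_eq (wOf_length d n)),
      wOf_count hd (2*n) le_rfl]
    omega

/-- The Dyck word associated with a Dyck path function. -/
def pOf {n : ℕ} {d : ℕ → ℕ} (hd : IsDyck n d) : DyckWord :=
  ⟨wOf d n, wOf_balance hd, wOf_nonneg hd⟩

lemma pOf_semilength {n : ℕ} {d : ℕ → ℕ} (hd : IsDyck n d) : (pOf hd).semilength = n := by
  have h1 : (wOf d n).count U = (wOf d n).count D := wOf_balance hd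
  have h2 := count_U_add_count_D (wOf d n)
  rw [wOf_length] at h2
  show (wOf d n).count U = n
  omega

lemma dOf_pOf {n : ℕ} {d : ℕ → ℕ} (hd : IsDyck n d) : dOf (pOf hd) = d := by
  funext i
  show wht (wOf d n) i = d i
  rcases le_or_gt i (2*n) with h | h
  · rw [wht, wOf_count hd i h]
    omega
  · rw [wht, List.take_of_length_le (by rw [wOf_length]; omega),
      ← List.take_of_length_le (le_of_eq (wOf_length d n)), wOf_count hd (2*n) le_rfl,
      hd.2.1 i (by omega), hd.2.1 (2*n) le_rfl]
    omega

lemma pOf_dOf (p : DyckWord) : pOf (isDyck_dOf p) = p := by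
  apply DyckWord.ext
  show wOf (dOf p) p.semilength = p.toList
  apply List.ext_getElem
  · rw [wOf_length, ← length_toList]
  · intro i h1 h2
    rw [wOf_length, ← length_toList] at h1
    have hget : (wOf (dOf p) p.semilength)[i] =
        if dOf p (i+1) = dOf p i + 1 then U else D := by
      simp only [wOf, List.getElem_map, List.getElem_range]
    rw [hget]
    have hts := take_succ_getElem p.toList i h2
    have hc2 := p.count_D_le_count_U (i+1)
    rw [hts, List.count_append, List.count_append] at hc2
    have hc1 := p.count_D_le_count_U i
    cases hg : p.toList[i] with
    | U =>
      rw [if_pos]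
      rw [dOf, dOf, wht, wht, hts, List.count_append, List.count_append, hg, count_UU, count_DU]
      rw [hg, count_UU, count_DU] at hc2
      omega
    | D =>
      rw [if_neg]
      rw [dOf, dOf, wht, wht, hts, List.count_append, List.count_append, hg, count_UD, count_DD]
      rw [hg, count_UD, count_DD] at hc2
      omega

lemma isDyck_dOf' {n : ℕ} (p : DyckWord) (hp : p.semilength = n) : IsDyck n (dOf p) := by
  rw [← hp]; exact isDyck_dOf p

lemma pOf_dOf' {n : ℕ} (p : DyckWord) (hp : p.semilength = n) (hd : IsDyck n (dOf p)) :
    pOf hd = p := by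
  subst hp
  exact pOf_dOf p

lemma card_dyck_fun (n s : ℕ) :
    Nat.card {d : ℕ → ℕ // IsDyck n d ∧ Nat.log 2 (1 + height d) = s}
      = Nat.card {p : DyckWord // p.semilength = n ∧ Nat.log 2 (1 + hgt p.toList) = s} := by
  apply Nat.card_congr
  refine ⟨fun x => ⟨pOf x.2.1, pOf_semilength x.2.1, ?_⟩,
    fun y => ⟨dOf y.1, isDyck_dOf' y.1 y.2.1, by rw [height_dOf]; exact y.2.2⟩,
    fun x => Subtype.ext (dOf_pOf x.2.1),
    fun y => Subtype.ext (pOf_dOf' y.1 y.2.1 (isDyck_dOf' y.1 y.2.1))⟩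
  have h := height_dOf (pOf x.2.1)
  rw [dOf_pOf x.2.1] at h
  rw [← h]
  exact x.2.2

end HSAux

/-- For all `n, s ≥ 0`, the number of full binary trees with `n` internal vertices and
Horton–Strahler number `s` equals the number of Dyck paths of length `2n` whose height `H`
satisfies `⌊log₂(1 + H)⌋ = s`. -/
theorem horton_strahler_count (n s : ℕ) :
    Nat.card {t : Set Word // IsFullBinaryTree t ∧ (internals t).ncard = n ∧ HS t = s} =
    Nat.card {d : ℕ → ℕ // IsDyck n d ∧ Nat.log 2 (1 + height d) = s} := by
  rw [HSAux.card_FBT, HSAux.card_tree_subtype, HSAux.Dt_eq_Pd, ← HSAux.card_dw_subtype,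
    ← HSAux.card_dyck_fun]
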